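/- arXiv:2206.14112 — 2 statements merged into one kernel-verified Lean document; each statement's English description precedes it below -/
import Mathlib

section
/- Let N be a finite player set, (ω,Σ) a weight system on N, and (N,v) a TU-game. For a nonempty T⊆N, write Φ^ω_{iT} for the (ω,Σ)-weighted Shapley value of player i∈T in the subgame v^T induced by T. Then for every nonempty T⊆N and every i∈T: Φ^ω_{iT} = (ω̄^T_i/ω̄^T)·(v(T)−v(T∖{i})) + Σ_{j∈T∖{i}} (ω̄^T_j/ω̄^T)·Φ^ω_{i,T∖{j}}. -/
open Finset

variable {α : Type*}

noncomputable section

/-- `ω̄^S_i`: the weight of `i` if `i` belongs to the top-priority part `S̄` of `S`, else `0`.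
Here the ordered partition `Σ` is encoded by the priority function `p`. -/
def wbar [DecidableEq α] (ω : α → ℝ) (p : α → ℕ) (S : Finset α) (i : α) : ℝ :=
  if i ∈ S ∧ p i = S.sup p then ω i else 0

/-- `ω̄^S = ∑_{i ∈ S̄} ω_i`. -/
def wbarSum [DecidableEq α] (ω : α → ℝ) (p : α → ℕ) (S : Finset α) : ℝ :=
  ∑ i ∈ S, wbar ω p S i

/-- unanimity coefficients `λ_S(v)` (Harsanyi dividends). -/
def unanimityCoeff [DecidableEq α] (v : Finset α → ℝ) (S : Finset α) : ℝ :=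
  ∑ T ∈ S.powerset, (-1 : ℝ) ^ (S.card - T.card) * v T

/-- `Φ^ω_{iM}`: the `(ω,Σ)`-weighted Shapley value of player `i` for the subgame of `v`
induced by the ground coalition `M` (with the weight system restricted to `M`;
note that `wbar ω p S i = 0` unless `i ∈ S̄`). -/
def wShapley [DecidableEq α] (ω : α → ℝ) (p : α → ℕ) (v : Finset α → ℝ)
    (M : Finset α) (i : α) : ℝ :=
  ∑ S ∈ M.powerset, wbar ω p S i / wbarSum ω p S * unanimityCoeff v S

lemma neg_one_pow_powerset_aux [DecidableEq α] (x : Finset α) :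
    (∑ m ∈ x.powerset, (-1 : ℝ) ^ m.card) = if x = ∅ then 1 else 0 := by
  have h := Finset.sum_powerset_neg_one_pow_card (x := x)
  have := congrArg (fun z : ℤ => (z : ℝ)) h
  push_cast at this
  rw [this]

lemma aux1 [DecidableEq α] (M T : Finset α) (hT : T ⊆ M) :
    ∑ S ∈ M.powerset.filter (fun S => T ⊆ S), (-1:ℝ)^(S.card - T.card)
      = if T = M then 1 else 0 := by
  have hbij : ∑ S ∈ M.powerset.filter (fun S => T ⊆ S), (-1:ℝ)^(S.card - T.card)
      = ∑ U ∈ (M \ T).powerset, (-1:ℝ)^U.card := by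
    refine Finset.sum_nbij' (fun S => S \ T) (fun U => T ∪ U) ?_ ?_ ?_ ?_ ?_
    · intro S hS
      simp only [mem_filter, mem_powerset] at hS
      simpa [mem_powerset] using sdiff_subset_sdiff hS.1 (le_refl T)
    · intro U hU
      simp only [mem_powerset] at hU
      simp only [mem_filter, mem_powerset]
      exact ⟨union_subset hT (hU.trans (sdiff_subset)), subset_union_left⟩
    · intro S hS
      simp only [mem_filter, mem_powerset] at hS
      exact union_sdiff_of_subset hS.2
    · intro U hU
      simp only [mem_powerset] at hU
      show (T ∪ U) \ T = U
      exact Finset.union_sdiff_cancel_left ((Finset.sdiff_disjoint.mono_left hU).symm)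
    · intro S hS
      simp only [mem_filter, mem_powerset] at hS
      congr 1
      exact (card_sdiff_of_subset hS.2).symm
  rw [hbij, neg_one_pow_powerset_aux]
  congr 1
  simp only [eq_iff_iff, sdiff_eq_empty_iff_subset]
  exact ⟨fun h => subset_antisymm hT h, fun h => h ▸ le_refl _⟩

lemma sum_unanimity [DecidableEq α] (v : Finset α → ℝ) (M : Finset α) :
    ∑ S ∈ M.powerset, unanimityCoeff v S = v M := by
  unfold unanimityCoeff
  have h1 : ∀ S ∈ M.powerset, (∑ T ∈ S.powerset, (-1:ℝ)^(S.card - T.card) * v T)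
      = ∑ T ∈ M.powerset, (if T ⊆ S then (-1:ℝ)^(S.card - T.card) * v T else 0) := by
    intro S hS
    rw [← Finset.sum_filter]
    apply Finset.sum_congr _ (fun _ _ => rfl)
    ext T
    simp only [mem_filter, mem_powerset]
    exact ⟨fun h => ⟨h.trans (mem_powerset.mp hS), h⟩, fun h => h.2⟩
  rw [Finset.sum_congr rfl h1, Finset.sum_comm]
  have h2 : ∀ T ∈ M.powerset,
      (∑ S ∈ M.powerset, if T ⊆ S then (-1:ℝ)^(S.card-T.card) * v T else 0)
      = (if T = M then 1 else 0) * v T := by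
    intro T hT
    rw [Finset.sum_ite, Finset.sum_const_zero, add_zero, ← Finset.sum_mul,
      aux1 M T (mem_powerset.mp hT)]
  rw [Finset.sum_congr rfl h2]
  simp only [ite_mul, one_mul, zero_mul]
  rw [Finset.sum_ite_eq' M.powerset M v]
  simp

lemma wbarSum_pos [DecidableEq α] (ω : α → ℝ) (hω : ∀ i, 0 < ω i) (p : α → ℕ)
    (S : Finset α) (hS : S.Nonempty) : 0 < wbarSum ω p S := by
  obtain ⟨b, hb, hsup⟩ := Finset.exists_mem_eq_sup S hS p
  refine Finset.sum_pos' (fun j _ => ?_) ⟨b, hb, ?_⟩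
  · unfold wbar; split
    · exact (hω j).le
    · exact le_refl 0
  · unfold wbar; rw [if_pos ⟨hb, hsup.symm⟩]; exact hω b

lemma key_coeff [DecidableEq α] (ω : α → ℝ) (hω : ∀ i, 0 < ω i) (p : α → ℕ)
    (T : Finset α) (hT : T.Nonempty) (i : α) (hi : i ∈ T) (S : Finset α) (hS : S ⊆ T) :
    wbar ω p S i / wbarSum ω p S
      = (if i ∈ S then wbar ω p T i / wbarSum ω p T else 0)
        + (∑ j ∈ T.erase i, if j ∈ S then 0 else wbar ω p T j / wbarSum ω p T)
          * (wbar ω p S i / wbarSum ω p S) := by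
  by_cases hiS : i ∈ S
  · have hSne : S.Nonempty := ⟨i, hiS⟩
    have hW := wbarSum_pos ω hω p T hT
    have hWS := wbarSum_pos ω hω p S hSne
    rw [if_pos hiS]
    have hDsum : (∑ j ∈ T.erase i, if j ∈ S then 0 else wbar ω p T j / wbarSum ω p T)
        = (∑ j ∈ T.erase i, if j ∈ S then 0 else wbar ω p T j) / wbarSum ω p T := by
      rw [Finset.sum_div]
      exact Finset.sum_congr rfl fun j _ => by split <;> simp
    rw [hDsum]
    set D := ∑ j ∈ T.erase i, if j ∈ S then 0 else wbar ω p T j with hD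
    have hE : wbarSum ω p T - D = ∑ j ∈ S, wbar ω p T j := by
      have h1 : D = ∑ j ∈ T, (if j ∈ S then 0 else wbar ω p T j) :=
        Finset.sum_erase T (by rw [if_pos hiS])
      rw [h1]
      unfold wbarSum
      rw [← Finset.sum_sub_distrib]
      have h2 : ∀ j ∈ T, wbar ω p T j - (if j ∈ S then 0 else wbar ω p T j)
          = if j ∈ S then wbar ω p T j else 0 := by
        intro j _; split <;> ring
      rw [Finset.sum_congr rfl h2, ← Finset.sum_filter, Finset.filter_mem_eq_inter,
        Finset.inter_eq_right.mpr hS]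
    rcases lt_or_eq_of_le (Finset.sup_mono hS : S.sup p ≤ T.sup p) with hlt | heq
    · have hTi : wbar ω p T i = 0 := by
        unfold wbar
        rw [if_neg]
        rintro ⟨-, h⟩
        have := Finset.le_sup (f := p) hiS
        omega
      have hE0 : (∑ j ∈ S, wbar ω p T j) = 0 := by
        apply Finset.sum_eq_zero
        intro j hj
        unfold wbar
        rw [if_neg]
        rintro ⟨-, h⟩
        have := Finset.le_sup (f := p) hj
        omega
      have hDW : D = wbarSum ω p T := by
        rw [hE0] at hE; linarith
      rw [hTi, hDW]
      field_simp
      ring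
    · have hjeq : ∀ j ∈ S, wbar ω p T j = wbar ω p S j := by
        intro j hj
        simp [wbar, heq, hj, hS hj]
      have hE2 : (∑ j ∈ S, wbar ω p T j) = wbarSum ω p S := by
        unfold wbarSum; exact Finset.sum_congr rfl hjeq
      have hE3 : D = wbarSum ω p T - wbarSum ω p S := by
        rw [hE2] at hE; linarith
      rw [hjeq i hiS, hE3]
      field_simp
      ring
  · have h0 : wbar ω p S i = 0 := if_neg (by tauto)
    simp [h0, hiS]

/-- Recursion formula for the weighted Shapley values of the subgames:
`Φ^ω_{iT} = (ω̄^T_i/ω̄^T)(v(T)−v(T∖{i})) + ∑_{j ∈ T∖{i}} (ω̄^T_j/ω̄^T) Φ^ω_{i,T∖{j}}`. -/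
theorem weighted_shapley_subgame_recursion [Fintype α] [DecidableEq α]
    (ω : α → ℝ) (hω : ∀ i, 0 < ω i) (p : α → ℕ) (hp : ∀ i, 1 ≤ p i)
    (v : Finset α → ℝ) (hv : v ∅ = 0)
    (T : Finset α) (hT : T.Nonempty) (i : α) (hi : i ∈ T) :
    wShapley ω p v T i =
      wbar ω p T i / wbarSum ω p T * (v T - v (T.erase i)) +
        ∑ j ∈ T.erase i, wbar ω p T j / wbarSum ω p T * wShapley ω p v (T.erase j) i := by
  have hsplit : v T - v (T.erase i)
      = ∑ S ∈ T.powerset, (if i ∈ S then unanimityCoeff v S else 0) := by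
    rw [← sum_unanimity v T, ← sum_unanimity v (T.erase i)]
    have hps : (T.erase i).powerset = T.powerset.filter (fun S => i ∉ S) := by
      ext S; simp [Finset.subset_erase, and_comm]
    rw [hps, Finset.sum_filter, ← Finset.sum_sub_distrib]
    apply Finset.sum_congr rfl
    intro S _
    by_cases h : i ∈ S <;> simp [h]
  have hsub : ∀ j ∈ T.erase i, wShapley ω p v (T.erase j) i
      = ∑ S ∈ T.powerset,
          (if j ∈ S then 0 else wbar ω p S i / wbarSum ω p S * unanimityCoeff v S) := by
    intro j hj
    unfold wShapley
    have hps : (T.erase j).powerset = T.powerset.filter (fun S => j ∉ S) := by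
      ext S; simp [Finset.subset_erase, and_comm]
    rw [hps, Finset.sum_filter]
    apply Finset.sum_congr rfl
    intro S _
    by_cases h : j ∈ S <;> simp [h]
  have h2 : ∑ j ∈ T.erase i, wbar ω p T j / wbarSum ω p T * wShapley ω p v (T.erase j) i
      = ∑ S ∈ T.powerset,
          (∑ j ∈ T.erase i, if j ∈ S then 0 else wbar ω p T j / wbarSum ω p T)
            * (wbar ω p S i / wbarSum ω p S * unanimityCoeff v S) := by
    calc ∑ j ∈ T.erase i, wbar ω p T j / wbarSum ω p T * wShapley ω p v (T.erase j) i
        = ∑ j ∈ T.erase i, ∑ S ∈ T.powerset,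
            (if j ∈ S then 0 else (wbar ω p T j / wbarSum ω p T)
              * (wbar ω p S i / wbarSum ω p S * unanimityCoeff v S)) := by
          apply Finset.sum_congr rfl
          intro j hj
          rw [hsub j hj, Finset.mul_sum]
          apply Finset.sum_congr rfl
          intro S _
          split <;> simp
      _ = ∑ S ∈ T.powerset, ∑ j ∈ T.erase i,
            (if j ∈ S then 0 else (wbar ω p T j / wbarSum ω p T)
              * (wbar ω p S i / wbarSum ω p S * unanimityCoeff v S)) := Finset.sum_comm
      _ = ∑ S ∈ T.powerset,
            (∑ j ∈ T.erase i, if j ∈ S then 0 else wbar ω p T j / wbarSum ω p T)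
              * (wbar ω p S i / wbarSum ω p S * unanimityCoeff v S) := by
          apply Finset.sum_congr rfl
          intro S _
          rw [Finset.sum_mul]
          apply Finset.sum_congr rfl
          intro j _
          split <;> simp
  rw [hsplit, h2, Finset.mul_sum, ← Finset.sum_add_distrib]
  unfold wShapley
  apply Finset.sum_congr rfl
  intro S hS
  have hkey := key_coeff ω hω p T hT i hi S (mem_powerset.mp hS)
  have hmul : wbar ω p S i / wbarSum ω p S * unanimityCoeff v S
      = ((if i ∈ S then wbar ω p T i / wbarSum ω p T else 0)
        + (∑ j ∈ T.erase i, if j ∈ S then 0 else wbar ω p T j / wbarSum ω p T)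
          * (wbar ω p S i / wbarSum ω p S)) * unanimityCoeff v S := by rw [← hkey]
  conv_lhs => rw [hmul]
  by_cases h : i ∈ S
  · rw [if_pos h, if_pos h]
    ring
  · rw [if_neg h, if_neg h]
    ring

end
end

section
/- Let G=(N,E) be a connected simple graph on a finite player set N and let (ω,Σ) be a weight system on N with Σ = (N) the trivial ordered partition. Then the following are equivalent: (1) G preserves (ω,Σ)-convexity; (2) G is cycle-complete and G has no restricted subgraph that is a 4-path or a 3-pan; (3) G is a complete graph or a star. -/
open Finset

variable {α : Type*}

noncomputable section

open scoped Classical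

/-- `(ω,Σ)`-convexity of a TU-game `v`. -/
def WConvex [DecidableEq α] (ω : α → ℝ) (p : α → ℕ) (v : Finset α → ℝ) : Prop :=
  ∀ S T : Finset α, S ⊂ T →
    0 ≤ ∑ i ∈ S, wbar ω p T i * (v T - v (T.erase i) - v S + v (S.erase i))

/-- The connected component of `i` in the subgraph of `G` induced by `S`. -/
def compOf [Fintype α] (G : SimpleGraph α) (S : Finset α) (i : α) : Finset α :=
  S.filter fun j => Relation.ReflTransGen (fun a b => a ∈ S ∧ b ∈ S ∧ G.Adj a b) i j

/-- The communication game `v^G`: `v^G(S)` is the sum of `v` over the (vertex sets of the)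
connected components of the subgraph of `G` induced by `S`. -/
def commGame [Fintype α] [DecidableEq α] (G : SimpleGraph α)
    (v : Finset α → ℝ) (S : Finset α) : ℝ :=
  ∑ A ∈ S.image (compOf G S), v A

/-- `G` preserves `(ω,Σ)`-convexity. -/
def Preserves [Fintype α] [DecidableEq α] (G : SimpleGraph α)
    (ω : α → ℝ) (p : α → ℕ) : Prop :=
  ∀ v : Finset α → ℝ, v ∅ = 0 → WConvex ω p v → WConvex ω p (commGame G v)

/-- `G` is cycle-complete: the vertices of any cycle induce a complete subgraph. -/
def CycleComplete (G : SimpleGraph α) : Prop :=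
  ∀ (u : α) (c : G.Walk u u), c.IsCycle →
    ∀ x ∈ c.support, ∀ y ∈ c.support, x ≠ y → G.Adj x y

/-- `G` has a restricted subgraph which is a `4`-path. -/
def Has4Path (G : SimpleGraph α) : Prop :=
  ∃ i j k l : α, i ≠ j ∧ i ≠ k ∧ i ≠ l ∧ j ≠ k ∧ j ≠ l ∧ k ≠ l ∧
    G.Adj i j ∧ G.Adj j k ∧ G.Adj k l ∧ ¬G.Adj i k ∧ ¬G.Adj i l ∧ ¬G.Adj j l

/-- `G` has a restricted subgraph which is a `3`-pan. -/
def Has3Pan (G : SimpleGraph α) : Prop :=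
  ∃ i j k l : α, i ≠ j ∧ i ≠ k ∧ i ≠ l ∧ j ≠ k ∧ j ≠ l ∧ k ≠ l ∧
    G.Adj i j ∧ G.Adj j k ∧ G.Adj k i ∧ G.Adj i l ∧ ¬G.Adj j l ∧ ¬G.Adj k l

/-- `G` is complete. -/
def IsCompleteGraph (G : SimpleGraph α) : Prop := ∀ x y : α, x ≠ y → G.Adj x y

/-- `G` is a star: some vertex (the center) is adjacent to all other vertices and there are
no other edges. -/
def IsStarGraph (G : SimpleGraph α) : Prop :=
  ∃ c : α, ∀ x y : α, G.Adj x y ↔ x ≠ y ∧ (x = c ∨ y = c)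


-- ==================== auxiliary development ====================
section PTPaux
set_option linter.unusedSectionVars false
set_option maxHeartbeats 1000000

variable [Fintype α] [DecidableEq α] {G : SimpleGraph α}

lemma wbar_eq (ω : α → ℝ) {S : Finset α} {i : α} (hi : i ∈ S) :
    wbar ω (fun _ => 1) S i = ω i := by
  unfold wbar
  exact if_pos ⟨hi, by rw [Finset.sup_const ⟨i, hi⟩ 1]⟩

lemma wbar_nonneg (ω : α → ℝ) (hω : ∀ i, 0 < ω i) (p : α → ℕ) (S : Finset α) (i : α) :
    0 ≤ wbar ω p S i := by
  unfold wbar; split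
  · exact (hω i).le
  · rfl

/-- the induced adjacency relation inside `S` -/
abbrev relIn (G : SimpleGraph α) (S : Finset α) : α → α → Prop :=
  fun a b => a ∈ S ∧ b ∈ S ∧ G.Adj a b

lemma relIn_symm (G : SimpleGraph α) (S : Finset α) :
    Symmetric (Relation.ReflTransGen (relIn G S)) :=
  by
    haveI : Std.Symm (relIn G S) := ⟨fun _ _ h => ⟨h.2.1, h.1, h.2.2.symm⟩⟩
    exact fun a b h =>
      (Relation.ReflTransGen.symmetric : Std.Symm (Relation.ReflTransGen (relIn G S))).symm a b h

lemma reach_adj {S : Finset α} {a b : α} (ha : a ∈ S) (hb : b ∈ S) (h : G.Adj a b) :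
    Relation.ReflTransGen (relIn G S) a b :=
  Relation.ReflTransGen.single ⟨ha, hb, h⟩

lemma commGame_empty (v : Finset α → ℝ) : commGame G v ∅ = 0 := by
  simp [commGame]

/-- master partition lemma -/
lemma commGame_eq_parts (v : Finset α → ℝ) (S : Finset α) (P : Finset (Finset α))
    (hU : ∀ A ∈ P, A ⊆ S)
    (hcov : ∀ i ∈ S, ∃ A ∈ P, i ∈ A)
    (hconn : ∀ A ∈ P, ∀ i ∈ A, ∀ j ∈ A, Relation.ReflTransGen (relIn G S) i j)
    (hsep : ∀ A ∈ P, ∀ i ∈ A, ∀ j ∈ S, G.Adj i j → j ∈ A)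
    (hne : ∀ A ∈ P, A.Nonempty) :
    commGame G v S = ∑ A ∈ P, v A := by
  have hcomp : ∀ A ∈ P, ∀ i ∈ A, compOf G S i = A := by
    intro A hA i hi
    apply Finset.Subset.antisymm
    · intro j hj
      rw [compOf, Finset.mem_filter] at hj
      obtain ⟨hjS, hreach⟩ := hj
      clear hjS
      induction hreach with
      | refl => exact hi
      | tail _ hstep ih => exact hsep A hA _ ih _ hstep.2.1 hstep.2.2
    · intro j hj
      rw [compOf, Finset.mem_filter]
      exact ⟨hU A hA hj, hconn A hA i hi j hj⟩
  have himg : S.image (compOf G S) = P := by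
    apply Finset.Subset.antisymm
    · intro B hB
      rw [Finset.mem_image] at hB
      obtain ⟨i, hiS, rfl⟩ := hB
      obtain ⟨A, hA, hiA⟩ := hcov i hiS
      rw [hcomp A hA i hiA]; exact hA
    · intro A hA
      obtain ⟨i, hi⟩ := hne A hA
      rw [Finset.mem_image]
      exact ⟨i, hU A hA hi, hcomp A hA i hi⟩
  rw [commGame, himg]

lemma commGame_connected (v : Finset α → ℝ) (S : Finset α) (hS : S.Nonempty)
    (hconn : ∀ i ∈ S, ∀ j ∈ S, Relation.ReflTransGen (relIn G S) i j) :
    commGame G v S = v S := by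
  rw [commGame_eq_parts v S {S} (by simp) (fun i hi => ⟨S, by simp, hi⟩)
    (by simpa using hconn) (by intro A hA i hi j hj _; simp_all) (by simpa using hS)]
  simp

lemma commGame_isolated (v : Finset α → ℝ) (S : Finset α)
    (hiso : ∀ i ∈ S, ∀ j ∈ S, ¬ G.Adj i j) :
    commGame G v S = ∑ i ∈ S, v {i} := by
  rw [commGame_eq_parts v S (S.image fun i => {i})]
  · rw [Finset.sum_image (by intro i _ j _ h; simpa using h)]
  · intro A hA; rw [Finset.mem_image] at hA; obtain ⟨i, hi, rfl⟩ := hA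
    simpa using hi
  · intro i hi; exact ⟨{i}, Finset.mem_image_of_mem _ hi, by simp⟩
  · intro A hA i hi j hj
    rw [Finset.mem_image] at hA; obtain ⟨k, hk, rfl⟩ := hA
    simp only [Finset.mem_singleton] at hi hj; subst hi; subst hj
    exact Relation.ReflTransGen.refl
  · intro A hA i hi j hj hadj
    rw [Finset.mem_image] at hA; obtain ⟨k, hk, rfl⟩ := hA
    simp only [Finset.mem_singleton] at hi; subst hi
    exact absurd hadj (hiso i hk j hj)
  · intro A hA; rw [Finset.mem_image] at hA; obtain ⟨k, _, rfl⟩ := hA; simp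

/-- adding a singleton always helps at least `v {j}`. -/
lemma k1 {ω : α → ℝ} (hω : ∀ i, 0 < ω i) {v : Finset α → ℝ} (hv0 : v ∅ = 0)
    (hv : WConvex ω (fun _ => 1) v) (A : Finset α) (j : α) (hj : j ∉ A) :
    v A + v {j} ≤ v (insert j A) := by
  rcases A.eq_empty_or_nonempty with rfl | hA
  · simp [hv0]
  have hsub : ({j} : Finset α) ⊂ insert j A := by
    rw [Finset.ssubset_iff_of_subset (by simp)]
    obtain ⟨a, ha⟩ := hA
    exact ⟨a, by simp [ha], by simp; rintro rfl; exact hj ha⟩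
  have := hv {j} (insert j A) hsub
  rw [Finset.sum_singleton, wbar_eq ω (by simp), Finset.erase_insert hj] at this
  simp only [Finset.erase_singleton, hv0] at this
  nlinarith [hω j]

lemma mono_aux {ω : α → ℝ} (hω : ∀ i, 0 < ω i) {v : Finset α → ℝ} (hv0 : v ∅ = 0)
    (hv : WConvex ω (fun _ => 1) v) (A : Finset α) :
    ∀ C : Finset α, Disjoint A C →
      v A - ∑ x ∈ A, v {x} ≤ v (A ∪ C) - ∑ x ∈ A ∪ C, v {x} := by
  intro C
  induction C using Finset.induction_on with
  | empty => simp
  | @insert x C hx ih =>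
    intro hdisj
    rw [Finset.disjoint_insert_right] at hdisj
    have h1 := ih hdisj.2
    have hxAC : x ∉ A ∪ C := by simp [hx, hdisj.1]
    have h2 := k1 hω hv0 hv (A ∪ C) x hxAC
    rw [Finset.union_insert, Finset.sum_insert hxAC]
    linarith

lemma mono {ω : α → ℝ} (hω : ∀ i, 0 < ω i) {v : Finset α → ℝ} (hv0 : v ∅ = 0)
    (hv : WConvex ω (fun _ => 1) v) {A B : Finset α} (hAB : A ⊆ B) :
    v A - ∑ x ∈ A, v {x} ≤ v B - ∑ x ∈ B, v {x} := by
  have := mono_aux hω hv0 hv A (B \ A) (Finset.disjoint_sdiff)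
  rwa [Finset.union_sdiff_of_subset hAB] at this

/-- unanimity games (scaled by a nonnegative constant) are `WConvex`. -/
lemma wconvex_unan (ω : α → ℝ) (hω : ∀ i, 0 < ω i) (R : Finset α) {c : ℝ} (hc : 0 ≤ c) :
    WConvex ω (fun _ => 1) (fun A => if R ⊆ A then c else 0) := by
  intro S T hST
  apply Finset.sum_nonneg
  intro i hi
  apply mul_nonneg (wbar_nonneg ω hω _ _ _)
  by_cases hiR : i ∈ R
  · have h1 : ¬ R ⊆ T.erase i := fun h => by simpa using (Finset.mem_erase.1 (h hiR)).1
    have h2 : ¬ R ⊆ S.erase i := fun h => by simpa using (Finset.mem_erase.1 (h hiR)).1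
    simp only [h1, h2, if_neg, not_false_iff]
    by_cases hRS : R ⊆ S
    · have hRT : R ⊆ T := hRS.trans hST.subset
      simp [hRS, hRT]
    · by_cases hRT : R ⊆ T <;> simp [hRS, hRT, hc]
  · have h1 : R ⊆ T.erase i ↔ R ⊆ T := by
      rw [Finset.subset_erase]; exact ⟨fun h => h.1, fun h => ⟨h, hiR⟩⟩
    have h2 : R ⊆ S.erase i ↔ R ⊆ S := by
      rw [Finset.subset_erase]; exact ⟨fun h => h.1, fun h => ⟨h, hiR⟩⟩
    by_cases hRS : R ⊆ S <;> by_cases hRT : R ⊆ T <;>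
      simp [hRS, hRT, h1, h2]

def masterGame (ω : α → ℝ) (x y z : α) : Finset α → ℝ := fun A =>
  (if x ∈ A ∧ y ∈ A then ω x + ω z else 0)
  + (if x ∈ A ∧ z ∈ A then ω x + ω y else 0)
  - (if x ∈ A ∧ y ∈ A ∧ z ∈ A then ω x else 0)

lemma masterGame_empty (ω : α → ℝ) (x y z : α) : masterGame ω x y z ∅ = 0 := by
  simp [masterGame]

lemma wconvex_master (ω : α → ℝ) (hω : ∀ i, 0 < ω i) (x y z : α)
    (hxy : x ≠ y) (hxz : x ≠ z) (hyz : y ≠ z) :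
    WConvex ω (fun _ => 1) (masterGame ω x y z) := by
  have hyx := hxy.symm; have hzx := hxz.symm; have hzy := hyz.symm
  intro S T hST
  have hSsubT := hST.subset
  set f := masterGame ω x y z with hf
  set E : α → ℝ := fun i => f T - f (T.erase i) - f S + f (S.erase i) with hE
  have step1 : ∑ i ∈ S, wbar ω (fun _ => 1) T i * E i = ∑ i ∈ S, ω i * E i :=
    Finset.sum_congr rfl (fun i hi => by rw [wbar_eq ω (hSsubT hi)])
  rw [step1]
  have hzero : ∀ i ∈ S, i ∉ S ∩ ({x, y, z} : Finset α) → ω i * E i = 0 := by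
    intro i hi hnot
    have hix : i ≠ x := by rintro rfl; exact hnot (by simp [hi])
    have hiy : i ≠ y := by rintro rfl; exact hnot (by simp [hi])
    have hiz : i ≠ z := by rintro rfl; exact hnot (by simp [hi])
    have h1 : f (T.erase i) = f T := by
      simp [hf, masterGame, Finset.mem_erase, hxy, hix.symm, hiy.symm, hiz.symm]
    have h2 : f (S.erase i) = f S := by
      simp [hf, masterGame, Finset.mem_erase, hxy, hix.symm, hiy.symm, hiz.symm]
    simp [hE, h1, h2]
  rw [← Finset.sum_subset (Finset.inter_subset_left) hzero]
  have hrw : S ∩ ({x, y, z} : Finset α) = ({x, y, z} : Finset α).filter (· ∈ S) := by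
    rw [Finset.filter_mem_eq_inter, Finset.inter_comm]
  rw [hrw, Finset.sum_filter]
  rw [show ({x, y, z} : Finset α) = insert x {y, z} from rfl]
  rw [Finset.sum_insert (by simp [hxy, hxz]),
      show ({y, z} : Finset α) = insert y {z} from rfl,
      Finset.sum_insert (by simp [hyz]), Finset.sum_singleton]
  by_cases hxS : x ∈ S <;> by_cases hyS : y ∈ S <;> by_cases hzS : z ∈ S <;>
    by_cases hxT : x ∈ T <;> by_cases hyT : y ∈ T <;> by_cases hzT : z ∈ T <;>
      first
        | exact absurd (hSsubT hxS) hxT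
        | exact absurd (hSsubT hyS) hyT
        | exact absurd (hSsubT hzS) hzT
        | (simp only [hE, hf, masterGame, Finset.mem_erase, hxS, hyS, hzS, hxT, hyT, hzT,
            hxy, hxz, hyz, hyx, hzx, hzy, ne_eq, not_false_eq_true, not_true_eq_false,
            true_and, and_true, false_and, and_false, true_or, or_true, false_or, or_false,
            if_true, if_false, ite_true, ite_false, and_self, not_false_iff]
           try norm_num
           try nlinarith [hω x, hω y, hω z, mul_pos (hω x) (hω y), mul_pos (hω x) (hω z),
             mul_pos (hω y) (hω z)])

end PTPaux

section PTPcounter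
set_option linter.unusedSectionVars false
set_option maxHeartbeats 1000000
variable [Fintype α] [DecidableEq α] {G : SimpleGraph α}

lemma erase3a {a b c : α} (hb : b ≠ a) (hc : c ≠ a) :
    ({a,b,c} : Finset α).erase a = {b,c} := by
  rw [show ({a,b,c} : Finset α) = insert a {b,c} from rfl,
    Finset.erase_insert (by simp [hb.symm, hc.symm])]

lemma erase3b {a b c : α} (ha : a ≠ b) (hc : c ≠ b) :
    ({a,b,c} : Finset α).erase b = {a,c} := by
  ext u
  simp only [Finset.mem_erase, Finset.mem_insert, Finset.mem_singleton]
  constructor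
  · rintro ⟨hu, rfl | rfl | rfl⟩ <;> tauto
  · rintro (rfl | rfl) <;> exact ⟨‹_›, by tauto⟩

lemma erase3c {a b c : α} (ha : a ≠ c) (hb : b ≠ c) :
    ({a,b,c} : Finset α).erase c = {a,b} := by
  ext u
  simp only [Finset.mem_erase, Finset.mem_insert, Finset.mem_singleton]
  constructor
  · rintro ⟨hu, rfl | rfl | rfl⟩ <;> tauto
  · rintro (rfl | rfl) <;> exact ⟨‹_›, by tauto⟩

lemma erase4a {a b c d : α} (hb : b ≠ a) (hc : c ≠ a) (hd : d ≠ a) :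
    ({a,b,c,d} : Finset α).erase a = {b,c,d} := by
  rw [show ({a,b,c,d} : Finset α) = insert a {b,c,d} from rfl,
    Finset.erase_insert (by simp [hb.symm, hc.symm, hd.symm])]

lemma erase4b {a b c d : α} (ha : a ≠ b) (hc : c ≠ b) (hd : d ≠ b) :
    ({a,b,c,d} : Finset α).erase b = {a,c,d} := by
  ext u
  simp only [Finset.mem_erase, Finset.mem_insert, Finset.mem_singleton]
  constructor
  · rintro ⟨hu, rfl | rfl | rfl | rfl⟩ <;> tauto
  · rintro (rfl | rfl | rfl) <;> exact ⟨‹_›, by tauto⟩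

lemma erase4c {a b c d : α} (ha : a ≠ c) (hb : b ≠ c) (hd : d ≠ c) :
    ({a,b,c,d} : Finset α).erase c = {a,b,d} := by
  ext u
  simp only [Finset.mem_erase, Finset.mem_insert, Finset.mem_singleton]
  constructor
  · rintro ⟨hu, rfl | rfl | rfl | rfl⟩ <;> tauto
  · rintro (rfl | rfl | rfl) <;> exact ⟨‹_›, by tauto⟩

lemma erase4d {a b c d : α} (ha : a ≠ d) (hb : b ≠ d) (hc : c ≠ d) :
    ({a,b,c,d} : Finset α).erase d = {a,b,c} := by
  ext u
  simp only [Finset.mem_erase, Finset.mem_insert, Finset.mem_singleton]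
  constructor
  · rintro ⟨hu, rfl | rfl | rfl | rfl⟩ <;> tauto
  · rintro (rfl | rfl | rfl) <;> exact ⟨‹_›, by tauto⟩

lemma commGame_conn2 (v : Finset α → ℝ) {a b : α} (hab : G.Adj a b) :
    commGame G v {a,b} = v {a,b} := by
  apply commGame_connected _ _ (by simp)
  have ha : a ∈ ({a,b} : Finset α) := by simp
  have hb : b ∈ ({a,b} : Finset α) := by simp
  have r := reach_adj (G := G) ha hb hab
  intro x hx y hy
  simp only [Finset.mem_insert, Finset.mem_singleton] at hx hy
  rcases hx with rfl | rfl <;> rcases hy with rfl | rfl <;>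
    first
      | exact Relation.ReflTransGen.refl
      | exact r
      | exact relIn_symm G _ r

lemma commGame_conn3 (v : Finset α → ℝ) {a b c : α} (hab : G.Adj a b) (hbc : G.Adj b c) :
    commGame G v {a,b,c} = v {a,b,c} := by
  apply commGame_connected _ _ (by simp)
  have ha : a ∈ ({a,b,c} : Finset α) := by simp
  have hb : b ∈ ({a,b,c} : Finset α) := by simp
  have hc : c ∈ ({a,b,c} : Finset α) := by simp
  have rab := reach_adj (G := G) ha hb hab
  have rbc := reach_adj (G := G) hb hc hbc
  have rac := rab.trans rbc
  intro x hx y hy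
  simp only [Finset.mem_insert, Finset.mem_singleton] at hx hy
  rcases hx with rfl | rfl | rfl <;> rcases hy with rfl | rfl | rfl <;>
    first
      | exact Relation.ReflTransGen.refl
      | exact rab
      | exact rbc
      | exact rac
      | exact relIn_symm G _ rab
      | exact relIn_symm G _ rbc
      | exact relIn_symm G _ rac

lemma commGame_conn4 (v : Finset α → ℝ) {a b c d : α}
    (hab : G.Adj a b) (hbc : G.Adj b c) (hcd : G.Adj c d) :
    commGame G v {a,b,c,d} = v {a,b,c,d} := by
  apply commGame_connected _ _ (by simp)
  have ha : a ∈ ({a,b,c,d} : Finset α) := by simp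
  have hb : b ∈ ({a,b,c,d} : Finset α) := by simp
  have hc : c ∈ ({a,b,c,d} : Finset α) := by simp
  have hd : d ∈ ({a,b,c,d} : Finset α) := by simp
  have rab := reach_adj (G := G) ha hb hab
  have rbc := reach_adj (G := G) hb hc hbc
  have rcd := reach_adj (G := G) hc hd hcd
  have rac := rab.trans rbc
  have rad := rac.trans rcd
  have rbd := rbc.trans rcd
  intro x hx y hy
  simp only [Finset.mem_insert, Finset.mem_singleton] at hx hy
  rcases hx with rfl | rfl | rfl | rfl <;> rcases hy with rfl | rfl | rfl | rfl <;>
    first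
      | exact Relation.ReflTransGen.refl
      | exact rab
      | exact rbc
      | exact rcd
      | exact rac
      | exact rad
      | exact rbd
      | exact relIn_symm G _ rab
      | exact relIn_symm G _ rbc
      | exact relIn_symm G _ rcd
      | exact relIn_symm G _ rac
      | exact relIn_symm G _ rad
      | exact relIn_symm G _ rbd

lemma commGame_pair_iso (v : Finset α → ℝ) {a b : α} (hne : a ≠ b) (h : ¬ G.Adj a b) :
    commGame G v {a,b} = v {a} + v {b} := by
  rw [commGame_isolated v _ ?hiso]
  · rw [Finset.sum_insert (by simp [hne]), Finset.sum_singleton]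
  case hiso =>
    intro x hx y hy
    simp only [Finset.mem_insert, Finset.mem_singleton] at hx hy
    rcases hx with rfl | rfl <;> rcases hy with rfl | rfl <;>
      first
        | exact fun h' => G.irrefl h'
        | exact h
        | exact fun h' => h h'.symm

lemma commGame_split21 (v : Finset α → ℝ) {p q r : α} (hqr : G.Adj q r)
    (hpq : ¬ G.Adj p q) (hpr : ¬ G.Adj p r) (h1 : p ≠ q) (h2 : p ≠ r) :
    commGame G v {p,q,r} = v {p} + v {q,r} := by
  have hPne : ({p} : Finset α) ∉ ({({q,r} : Finset α)} : Finset (Finset α)) := by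
    simp only [Finset.mem_singleton]
    intro h
    have : q ∈ ({p} : Finset α) := by rw [h]; simp
    simp only [Finset.mem_singleton] at this
    exact h1 this.symm
  rw [commGame_eq_parts v _ ({{p}, {q,r}} : Finset (Finset α)) ?hU ?hcov ?hconn ?hsep ?hnem]
  · rw [Finset.sum_insert hPne, Finset.sum_singleton]
  case hU =>
    intro A hA
    simp only [Finset.mem_insert, Finset.mem_singleton] at hA
    rcases hA with rfl | rfl <;> intro u hu <;>
      simp only [Finset.mem_insert, Finset.mem_singleton] at hu ⊢ <;> tauto
  case hcov =>
    intro x hx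
    simp only [Finset.mem_insert, Finset.mem_singleton] at hx
    rcases hx with rfl | rfl | rfl
    · exact ⟨{x}, by simp, by simp⟩
    · exact ⟨{x, r}, by simp, by simp⟩
    · exact ⟨{q, x}, by simp, by simp⟩
  case hconn =>
    intro A hA
    simp only [Finset.mem_insert, Finset.mem_singleton] at hA
    have hq : q ∈ ({p,q,r} : Finset α) := by simp
    have hr : r ∈ ({p,q,r} : Finset α) := by simp
    have rr := reach_adj (G := G) hq hr hqr
    rcases hA with rfl | rfl <;> intro x hx y hy <;>
      simp only [Finset.mem_insert, Finset.mem_singleton] at hx hy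
    · subst hx; subst hy; exact Relation.ReflTransGen.refl
    · rcases hx with rfl | rfl <;> rcases hy with rfl | rfl <;>
        first
          | exact Relation.ReflTransGen.refl
          | exact rr
          | exact relIn_symm G _ rr
  case hsep =>
    intro A hA x hx y hy hadj
    simp only [Finset.mem_insert, Finset.mem_singleton] at hA
    rcases hA with rfl | rfl
    · simp only [Finset.mem_singleton] at hx; subst hx
      simp only [Finset.mem_insert, Finset.mem_singleton] at hy ⊢
      rcases hy with rfl | rfl | rfl
      · rfl
      · exact absurd hadj hpq
      · exact absurd hadj hpr
    · simp only [Finset.mem_insert, Finset.mem_singleton] at hx hy ⊢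
      rcases hx with rfl | rfl <;> rcases hy with rfl | rfl | rfl
      · exact absurd hadj.symm hpq
      · exact Or.inl rfl
      · exact Or.inr rfl
      · exact absurd hadj.symm hpr
      · exact Or.inl rfl
      · exact Or.inr rfl
  case hnem =>
    intro A hA
    simp only [Finset.mem_insert, Finset.mem_singleton] at hA
    rcases hA with rfl | rfl <;> simp

lemma notPreserves_diag (ω : α → ℝ) (hω : ∀ i, 0 < ω i) {a b c d : α}
    (nab : a ≠ b) (nac : a ≠ c) (nad : a ≠ d) (nbc : b ≠ c) (nbd : b ≠ d) (ncd : c ≠ d)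
    (hab : G.Adj a b) (hbc : G.Adj b c) (hcd : G.Adj c d) (hda : G.Adj d a)
    (hbd : ¬ G.Adj b d) :
    ¬ Preserves G ω (fun _ => 1) := by
  intro hpres
  set v : Finset α → ℝ := fun A => if ({b, d} : Finset α) ⊆ A then (1:ℝ) else 0 with hv
  have hv0 : v ∅ = 0 := by simp [hv, Finset.insert_subset_iff]
  have hvc : WConvex ω (fun _ => 1) v := wconvex_unan ω hω _ zero_le_one
  have vval : ∀ A : Finset α, b ∈ A → d ∈ A → v A = 1 := by
    intro A h1 h2; simp [hv, Finset.insert_subset_iff, h1, h2]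
  have vval0 : ∀ A : Finset α, b ∉ A ∨ d ∉ A → v A = 0 := by
    intro A h
    have hns : ¬ (({b,d} : Finset α) ⊆ A) := by
      rw [Finset.insert_subset_iff, Finset.singleton_subset_iff]; tauto
    simp [hv, hns]
  have w1 : commGame G v {a,b,c,d} = 1 := by
    rw [commGame_conn4 v hab hbc hcd]; exact vval _ (by simp) (by simp)
  have w2 : commGame G v {b,c,d} = 1 := by
    rw [commGame_conn3 v hbc hcd]; exact vval _ (by simp) (by simp)
  have w3 : commGame G v {a,c,d} = 0 := by
    rw [show ({a,c,d} : Finset α) = {a,d,c} from by ext u; simp; tauto,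
      commGame_conn3 v hda.symm hcd.symm]
    exact vval0 _ (Or.inl (by simp [nab.symm, nbd, nbc]))
  have w4 : commGame G v {a,b,c} = 0 := by
    rw [commGame_conn3 v hab hbc]
    exact vval0 _ (Or.inr (by simp [nad.symm, nbd.symm, ncd.symm]))
  have w5 : commGame G v {a,b,d} = 1 := by
    rw [show ({a,b,d} : Finset α) = {b,a,d} from by ext u; simp; tauto,
      commGame_conn3 v hab.symm hda.symm]
    exact vval _ (by simp) (by simp)
  have w6 : commGame G v {b,d} = 0 := by
    rw [commGame_pair_iso v nbd hbd,
      vval0 {b} (Or.inr (by simp [nbd.symm])), vval0 {d} (Or.inl (by simp [nbd]))]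
    ring
  have w7 : commGame G v {a,d} = 0 := by
    rw [commGame_conn2 v hda.symm]
    exact vval0 _ (Or.inl (by simp [nab.symm, nbd]))
  have w8 : commGame G v {a,b} = 0 := by
    rw [commGame_conn2 v hab]
    exact vval0 _ (Or.inr (by simp [nad.symm, nbd.symm]))
  have hST : ({a,b,d} : Finset α) ⊂ {a,b,c,d} := by
    rw [Finset.ssubset_iff_of_subset (by intro u hu; simp at hu ⊢; tauto)]
    exact ⟨c, by simp, by simp [nac.symm, nbc.symm, ncd]⟩
  have hw := hpres v hv0 hvc {a,b,d} {a,b,c,d} hST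
  rw [Finset.sum_insert (by simp [nab, nad]), Finset.sum_insert (by simp [nbd]),
    Finset.sum_singleton,
    wbar_eq ω (show a ∈ ({a,b,c,d} : Finset α) by simp),
    wbar_eq ω (show b ∈ ({a,b,c,d} : Finset α) by simp),
    wbar_eq ω (show d ∈ ({a,b,c,d} : Finset α) by simp),
    erase4a (a := a) nab.symm nac.symm nad.symm,
    erase4b (b := b) nab nbc.symm nbd.symm,
    erase4d (d := d) nad nbd ncd,
    erase3a (a := a) nab.symm nad.symm,
    erase3b (b := b) nab nbd.symm,
    erase3c (c := d) nad nbd,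
    w1, w2, w3, w4, w5, w6, w7, w8] at hw
  nlinarith [hω a]

lemma notPreserves_p4 (ω : α → ℝ) (hω : ∀ x, 0 < ω x) {i j k l : α}
    (nij : i ≠ j) (nik : i ≠ k) (nil : i ≠ l) (njk : j ≠ k) (njl : j ≠ l) (nkl : k ≠ l)
    (aij : G.Adj i j) (ajk : G.Adj j k) (akl : G.Adj k l)
    (bik : ¬ G.Adj i k) (bil : ¬ G.Adj i l) (bjl : ¬ G.Adj j l) :
    ¬ Preserves G ω (fun _ => 1) := by
  intro hpres
  set v : Finset α → ℝ := masterGame ω k i l with hv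
  have hv0 : v ∅ = 0 := masterGame_empty ω k i l
  have hvc : WConvex ω (fun _ => 1) v := wconvex_master ω hω k i l nik.symm nkl nil
  have vfull : v {i,j,k,l} = ω i + ω k + ω l := by
    simp only [hv, masterGame]
    rw [if_pos (by simp), if_pos (by simp), if_pos (by simp)]
    ring
  have vjkl : v {j,k,l} = ω k + ω i := by
    simp only [hv, masterGame]
    rw [if_neg (by simp [nij, nik, nil, njk, njl, nkl, nij.symm, nik.symm, nil.symm, njk.symm, njl.symm, nkl.symm]), if_pos (by simp), if_neg (by simp [nij, nik, nil, njk, njl, nkl, nij.symm, nik.symm, nil.symm, njk.symm, njl.symm, nkl.symm])]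
    ring
  have vkl : v {k,l} = ω k + ω i := by
    simp only [hv, masterGame]
    rw [if_neg (by simp [nij, nik, nil, njk, njl, nkl, nij.symm, nik.symm, nil.symm, njk.symm, njl.symm, nkl.symm]), if_pos (by simp), if_neg (by simp [nij, nik, nil, njk, njl, nkl, nij.symm, nik.symm, nil.symm, njk.symm, njl.symm, nkl.symm])]
    ring
  have vijk : v {i,j,k} = ω k + ω l := by
    simp only [hv, masterGame]
    rw [if_pos (by simp), if_neg (by simp [nij, nik, nil, njk, njl, nkl, nij.symm, nik.symm, nil.symm, njk.symm, njl.symm, nkl.symm]),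
      if_neg (by simp [nij, nik, nil, njk, njl, nkl, nij.symm, nik.symm, nil.symm, njk.symm, njl.symm, nkl.symm])]
    ring
  have vjk : v {j,k} = 0 := by
    simp only [hv, masterGame]
    rw [if_neg (by simp [nij, nik, nil, njk, njl, nkl, nij.symm, nik.symm, nil.symm, njk.symm, njl.symm, nkl.symm]), if_neg (by simp [nij, nik, nil, njk, njl, nkl, nij.symm, nik.symm, nil.symm, njk.symm, njl.symm, nkl.symm]),
      if_neg (by simp [nij, nik, nil, njk, njl, nkl, nij.symm, nik.symm, nil.symm, njk.symm, njl.symm, nkl.symm])]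
    ring
  have vij : v {i,j} = 0 := by
    simp only [hv, masterGame]
    rw [if_neg (by simp [nij, nik, nil, njk, njl, nkl, nij.symm, nik.symm, nil.symm, njk.symm, njl.symm, nkl.symm]), if_neg (by simp [nij, nik, nil, njk, njl, nkl, nij.symm, nik.symm, nil.symm, njk.symm, njl.symm, nkl.symm]),
      if_neg (by simp [nij, nik, nil, njk, njl, nkl, nij.symm, nik.symm, nil.symm, njk.symm, njl.symm, nkl.symm])]
    ring
  have vi : v {i} = 0 := by
    simp only [hv, masterGame]
    rw [if_neg (by simp [nij, nik, nil, njk, njl, nkl, nij.symm, nik.symm, nil.symm, njk.symm, njl.symm, nkl.symm]), if_neg (by simp [nij, nik, nil, njk, njl, nkl, nij.symm, nik.symm, nil.symm, njk.symm, njl.symm, nkl.symm]), if_neg (by simp [nij, nik, nil, njk, njl, nkl, nij.symm, nik.symm, nil.symm, njk.symm, njl.symm, nkl.symm])]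
    ring
  have vk : v {k} = 0 := by
    simp only [hv, masterGame]
    rw [if_neg (by simp [nij, nik, nil, njk, njl, nkl, nij.symm, nik.symm, nil.symm, njk.symm, njl.symm, nkl.symm]), if_neg (by simp [nij, nik, nil, njk, njl, nkl, nij.symm, nik.symm, nil.symm, njk.symm, njl.symm, nkl.symm]), if_neg (by simp [nij, nik, nil, njk, njl, nkl, nij.symm, nik.symm, nil.symm, njk.symm, njl.symm, nkl.symm])]
    ring
  have vl : v {l} = 0 := by
    simp only [hv, masterGame]
    rw [if_neg (by simp [nij, nik, nil, njk, njl, nkl, nij.symm, nik.symm, nil.symm, njk.symm, njl.symm, nkl.symm]), if_neg (by simp [nij, nik, nil, njk, njl, nkl, nij.symm, nik.symm, nil.symm, njk.symm, njl.symm, nkl.symm]), if_neg (by simp [nij, nik, nil, njk, njl, nkl, nij.symm, nik.symm, nil.symm, njk.symm, njl.symm, nkl.symm])]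
    ring
  have w1 : commGame G v {i,j,k,l} = ω i + ω k + ω l := by
    rw [commGame_conn4 v aij ajk akl]; exact vfull
  have w2 : commGame G v {j,k,l} = ω k + ω i := by
    rw [commGame_conn3 v ajk akl]; exact vjkl
  have w3 : commGame G v {i,k,l} = ω k + ω i := by
    rw [commGame_split21 v akl bik bil nik nil, vi, vkl]; ring
  have w4 : commGame G v {i,j,l} = 0 := by
    rw [show ({i,j,l} : Finset α) = {l,i,j} from by ext u; simp; tauto,
      commGame_split21 v aij (fun h => bil h.symm) (fun h => bjl h.symm) nil.symm njl.symm,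
      vl, vij]
    ring
  have w5 : commGame G v {i,j,k} = ω k + ω l := by
    rw [commGame_conn3 v aij ajk]; exact vijk
  have w6 : commGame G v {j,k} = 0 := by
    rw [commGame_conn2 v ajk]; exact vjk
  have w7 : commGame G v {i,k} = 0 := by
    rw [commGame_pair_iso v nik bik, vi, vk]; ring
  have w8 : commGame G v {i,j} = 0 := by
    rw [commGame_conn2 v aij]; exact vij
  have hST : ({i,j,k} : Finset α) ⊂ {i,j,k,l} := by
    rw [Finset.ssubset_iff_of_subset (by intro u hu; simp at hu ⊢; tauto)]
    exact ⟨l, by simp, by simp [nij, nik, nil, njk, njl, nkl, nij.symm, nik.symm, nil.symm, njk.symm, njl.symm, nkl.symm]⟩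
  have hw := hpres v hv0 hvc {i,j,k} {i,j,k,l} hST
  rw [Finset.sum_insert (by simp [nij, nik, nil, njk, njl, nkl, nij.symm, nik.symm, nil.symm, njk.symm, njl.symm, nkl.symm]), Finset.sum_insert (by simp [nij, nik, nil, njk, njl, nkl, nij.symm, nik.symm, nil.symm, njk.symm, njl.symm, nkl.symm]),
    Finset.sum_singleton,
    wbar_eq ω (show i ∈ ({i,j,k,l} : Finset α) by simp),
    wbar_eq ω (show j ∈ ({i,j,k,l} : Finset α) by simp),
    wbar_eq ω (show k ∈ ({i,j,k,l} : Finset α) by simp),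
    erase4a (a := i) nij.symm nik.symm nil.symm,
    erase4b (b := j) nij njk.symm njl.symm,
    erase4c (c := k) nik njk nkl.symm,
    erase3a (a := i) nij.symm nik.symm,
    erase3b (b := j) nij njk.symm,
    erase3c (c := k) nik njk,
    w1, w2, w3, w4, w5, w6, w7, w8] at hw
  nlinarith [mul_pos (hω j) (hω k)]

lemma notPreserves_pan (ω : α → ℝ) (hω : ∀ x, 0 < ω x) {i j k l : α}
    (nij : i ≠ j) (nik : i ≠ k) (nil : i ≠ l) (njk : j ≠ k) (njl : j ≠ l) (nkl : k ≠ l)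
    (aij : G.Adj i j) (ajk : G.Adj j k) (aki : G.Adj k i) (ail : G.Adj i l)
    (bjl : ¬ G.Adj j l) (bkl : ¬ G.Adj k l) :
    ¬ Preserves G ω (fun _ => 1) := by
  intro hpres
  set v : Finset α → ℝ := masterGame ω j k l with hv
  have hv0 : v ∅ = 0 := masterGame_empty ω j k l
  have hvc : WConvex ω (fun _ => 1) v := wconvex_master ω hω j k l njk njl nkl
  have vfull : v {i,j,k,l} = ω j + ω k + ω l := by
    simp only [hv, masterGame]
    rw [if_pos (by simp), if_pos (by simp), if_pos (by simp)]
    ring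
  have vjk : v {j,k} = ω j + ω l := by
    simp only [hv, masterGame]
    rw [if_pos (by simp), if_neg (by simp [nij, nik, nil, njk, njl, nkl, nij.symm, nik.symm, nil.symm, njk.symm, njl.symm, nkl.symm]),
      if_neg (by simp [nij, nik, nil, njk, njl, nkl, nij.symm, nik.symm, nil.symm, njk.symm, njl.symm, nkl.symm])]
    ring
  have vikl : v {i,k,l} = 0 := by
    simp only [hv, masterGame]
    rw [if_neg (by simp [nij, nik, nil, njk, njl, nkl, nij.symm, nik.symm, nil.symm, njk.symm, njl.symm, nkl.symm]), if_neg (by simp [nij, nik, nil, njk, njl, nkl, nij.symm, nik.symm, nil.symm, njk.symm, njl.symm, nkl.symm]),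
      if_neg (by simp [nij, nik, nil, njk, njl, nkl, nij.symm, nik.symm, nil.symm, njk.symm, njl.symm, nkl.symm])]
    ring
  have vijk : v {i,j,k} = ω j + ω l := by
    simp only [hv, masterGame]
    rw [if_pos (by simp), if_neg (by simp [nij, nik, nil, njk, njl, nkl, nij.symm, nik.symm, nil.symm, njk.symm, njl.symm, nkl.symm]),
      if_neg (by simp [nij, nik, nil, njk, njl, nkl, nij.symm, nik.symm, nil.symm, njk.symm, njl.symm, nkl.symm])]
    ring
  have vijl : v {i,j,l} = ω j + ω k := by
    simp only [hv, masterGame]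
    rw [if_neg (by simp [nij, nik, nil, njk, njl, nkl, nij.symm, nik.symm, nil.symm, njk.symm, njl.symm, nkl.symm]), if_pos (by simp),
      if_neg (by simp [nij, nik, nil, njk, njl, nkl, nij.symm, nik.symm, nil.symm, njk.symm, njl.symm, nkl.symm])]
    ring
  have vij : v {i,j} = 0 := by
    simp only [hv, masterGame]
    rw [if_neg (by simp [nij, nik, nil, njk, njl, nkl, nij.symm, nik.symm, nil.symm, njk.symm, njl.symm, nkl.symm]), if_neg (by simp [nij, nik, nil, njk, njl, nkl, nij.symm, nik.symm, nil.symm, njk.symm, njl.symm, nkl.symm]),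
      if_neg (by simp [nij, nik, nil, njk, njl, nkl, nij.symm, nik.symm, nil.symm, njk.symm, njl.symm, nkl.symm])]
    ring
  have vil : v {i,l} = 0 := by
    simp only [hv, masterGame]
    rw [if_neg (by simp [nij, nik, nil, njk, njl, nkl, nij.symm, nik.symm, nil.symm, njk.symm, njl.symm, nkl.symm]), if_neg (by simp [nij, nik, nil, njk, njl, nkl, nij.symm, nik.symm, nil.symm, njk.symm, njl.symm, nkl.symm]),
      if_neg (by simp [nij, nik, nil, njk, njl, nkl, nij.symm, nik.symm, nil.symm, njk.symm, njl.symm, nkl.symm])]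
    ring
  have vj : v {j} = 0 := by
    simp only [hv, masterGame]
    rw [if_neg (by simp [nij, nik, nil, njk, njl, nkl, nij.symm, nik.symm, nil.symm, njk.symm, njl.symm, nkl.symm]), if_neg (by simp [nij, nik, nil, njk, njl, nkl, nij.symm, nik.symm, nil.symm, njk.symm, njl.symm, nkl.symm]), if_neg (by simp [nij, nik, nil, njk, njl, nkl, nij.symm, nik.symm, nil.symm, njk.symm, njl.symm, nkl.symm])]
    ring
  have vl : v {l} = 0 := by
    simp only [hv, masterGame]
    rw [if_neg (by simp [nij, nik, nil, njk, njl, nkl, nij.symm, nik.symm, nil.symm, njk.symm, njl.symm, nkl.symm]), if_neg (by simp [nij, nik, nil, njk, njl, nkl, nij.symm, nik.symm, nil.symm, njk.symm, njl.symm, nkl.symm]), if_neg (by simp [nij, nik, nil, njk, njl, nkl, nij.symm, nik.symm, nil.symm, njk.symm, njl.symm, nkl.symm])]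
    ring
  have w1 : commGame G v {i,j,k,l} = ω j + ω k + ω l := by
    rw [show ({i,j,k,l} : Finset α) = {l,i,j,k} from by ext u; simp; tauto,
      commGame_conn4 v ail.symm aij ajk]
    rw [show ({l,i,j,k} : Finset α) = {i,j,k,l} from by ext u; simp; tauto]
    exact vfull
  have w2 : commGame G v {j,k,l} = ω j + ω l := by
    rw [show ({j,k,l} : Finset α) = {l,j,k} from by ext u; simp; tauto,
      commGame_split21 v ajk (fun h => bjl h.symm) (fun h => bkl h.symm) njl.symm nkl.symm,
      vl, vjk]
    ring
  have w3 : commGame G v {i,k,l} = 0 := by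
    rw [show ({i,k,l} : Finset α) = {k,i,l} from by ext u; simp; tauto,
      commGame_conn3 v aki ail]
    rw [show ({k,i,l} : Finset α) = {i,k,l} from by ext u; simp; tauto]
    exact vikl
  have w4 : commGame G v {i,j,k} = ω j + ω l := by
    rw [commGame_conn3 v aij ajk]; exact vijk
  have w5 : commGame G v {i,j,l} = ω j + ω k := by
    rw [show ({i,j,l} : Finset α) = {j,i,l} from by ext u; simp; tauto,
      commGame_conn3 v aij.symm ail]
    rw [show ({j,i,l} : Finset α) = {i,j,l} from by ext u; simp; tauto]
    exact vijl
  have w6 : commGame G v {j,l} = 0 := by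
    rw [commGame_pair_iso v njl bjl, vj, vl]; ring
  have w7 : commGame G v {i,l} = 0 := by
    rw [commGame_conn2 v ail]; exact vil
  have w8 : commGame G v {i,j} = 0 := by
    rw [commGame_conn2 v aij]; exact vij
  have hST : ({i,j,l} : Finset α) ⊂ {i,j,k,l} := by
    rw [Finset.ssubset_iff_of_subset (by intro u hu; simp at hu ⊢; tauto)]
    exact ⟨k, by simp, by simp [nij, nik, nil, njk, njl, nkl, nij.symm, nik.symm, nil.symm, njk.symm, njl.symm, nkl.symm]⟩
  have hw := hpres v hv0 hvc {i,j,l} {i,j,k,l} hST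
  rw [Finset.sum_insert (by simp [nij, nik, nil, njk, njl, nkl, nij.symm, nik.symm, nil.symm, njk.symm, njl.symm, nkl.symm]), Finset.sum_insert (by simp [nij, nik, nil, njk, njl, nkl, nij.symm, nik.symm, nil.symm, njk.symm, njl.symm, nkl.symm]),
    Finset.sum_singleton,
    wbar_eq ω (show i ∈ ({i,j,k,l} : Finset α) by simp),
    wbar_eq ω (show j ∈ ({i,j,k,l} : Finset α) by simp),
    wbar_eq ω (show l ∈ ({i,j,k,l} : Finset α) by simp),
    erase4a (a := i) nij.symm nik.symm nil.symm,
    erase4b (b := j) nij njk.symm njl.symm,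
    erase4d (d := l) nil njl nkl,
    erase3a (a := i) nij.symm nil.symm,
    erase3b (b := j) nij njl.symm,
    erase3c (c := l) nil njl,
    w1, w2, w3, w4, w5, w6, w7, w8] at hw
  nlinarith [mul_pos (hω i) (hω j)]


end PTPcounter

section PTPgraph
set_option linter.unusedSectionVars false
set_option maxHeartbeats 1000000
variable {G : SimpleGraph α}

/-- a 4-cycle with (at least) one missing diagonal -/
def HasDiag (G : SimpleGraph α) : Prop :=
  ∃ a b c d : α, a ≠ b ∧ a ≠ c ∧ a ≠ d ∧ b ≠ c ∧ b ≠ d ∧ c ≠ d ∧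
    G.Adj a b ∧ G.Adj b c ∧ G.Adj c d ∧ G.Adj d a ∧ ¬G.Adj b d

lemma stepA (hG : G.Preconnected) {p q : α} (hne : p ≠ q) (hnadj : ¬G.Adj p q) :
    Has4Path G ∨ ∃ c, G.Adj p c ∧ G.Adj c q := by
  classical
  have hreach : ∃ n, ∃ w : G.Walk p q, w.length = n := ⟨(hG p q).some.length, (hG p q).some, rfl⟩
  obtain ⟨w, hw⟩ : ∃ w : G.Walk p q, w.length = Nat.find hreach := Nat.find_spec hreach
  have hmin : ∀ w' : G.Walk p q, Nat.find hreach ≤ w'.length :=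
    fun w' => Nat.find_min' hreach ⟨w', rfl⟩
  cases w with
  | nil => exact absurd rfl hne
  | @cons _ b _ h₁ w₁ =>
    cases w₁ with
    | nil => exact absurd h₁ hnadj
    | @cons _ e _ h₂ w₂ =>
      cases w₂ with
      | nil => exact Or.inr ⟨_, h₁, h₂⟩
      | @cons _ f _ h₃ w₃ =>
        simp only [SimpleGraph.Walk.length_cons] at hw
        have hpe : p ≠ e := by
          rintro rfl
          have := hmin (SimpleGraph.Walk.cons h₃ w₃)
          simp only [SimpleGraph.Walk.length_cons] at this
          omega
        have hbf : b ≠ f := by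
          rintro rfl
          have := hmin (SimpleGraph.Walk.cons h₁ w₃)
          simp only [SimpleGraph.Walk.length_cons] at this
          omega
        have hpf : p ≠ f := by
          rintro rfl
          have := hmin w₃
          omega
        have npe : ¬ G.Adj p e := by
          intro hx
          have := hmin (SimpleGraph.Walk.cons hx (SimpleGraph.Walk.cons h₃ w₃))
          simp only [SimpleGraph.Walk.length_cons] at this
          omega
        have nbf : ¬ G.Adj b f := by
          intro hx
          have := hmin (SimpleGraph.Walk.cons h₁ (SimpleGraph.Walk.cons hx w₃))
          simp only [SimpleGraph.Walk.length_cons] at this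
          omega
        have npf : ¬ G.Adj p f := by
          intro hx
          have := hmin (SimpleGraph.Walk.cons hx w₃)
          simp only [SimpleGraph.Walk.length_cons] at this
          omega
        exact Or.inl ⟨p, b, e, f, h₁.ne, hpe, hpf, h₂.ne, hbf, h₃.ne, h₁, h₂, h₃, npe, npf, nbf⟩

lemma extract (hG : G.Connected) (h4p : ¬ Has4Path G) (h3p : ¬ Has3Pan G)
    (hdg : ¬ HasDiag G) : IsCompleteGraph G ∨ IsStarGraph G := by
  classical
  by_cases hc : IsCompleteGraph G
  · exact Or.inl hc
  right
  obtain ⟨p, q, hpq_ne, hpq⟩ : ∃ p q : α, p ≠ q ∧ ¬ G.Adj p q := by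
    unfold IsCompleteGraph at hc
    push_neg at hc
    obtain ⟨x, y, h1, h2⟩ := hc
    exact ⟨x, y, h1, h2⟩
  have hcn : ∀ u v : α, u ≠ v → ¬G.Adj u v → ∃ w, G.Adj u w ∧ G.Adj w v := by
    intro u v h1 h2
    rcases stepA hG.preconnected h1 h2 with h | h
    · exact absurd h h4p
    · exact h
  obtain ⟨c, hpc, hcq⟩ := hcn p q hpq_ne hpq
  -- Step B : c is adjacent to every other vertex
  have hhub : ∀ x, x ≠ c → G.Adj c x := by
    intro x hxc
    by_contra hncx
    have hxp : x ≠ p := by rintro rfl; exact hncx hpc.symm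
    have hxq : x ≠ q := by rintro rfl; exact hncx hcq
    obtain ⟨d, hcd, hdx⟩ := hcn c x (Ne.symm hxc) hncx
    by_cases hdp : d = p
    · subst hdp
      by_cases hqx : G.Adj q x
      · exact hdg ⟨c, d, x, q, hpc.ne', Ne.symm hxc, hcq.ne, Ne.symm hxp, hpq_ne, hxq,
          hpc.symm, hdx, hqx.symm, hcq.symm, hpq⟩
      · exact h4p ⟨q, c, d, x, hcq.ne', hpq_ne.symm, Ne.symm hxq, hpc.ne', Ne.symm hxc,
          Ne.symm hxp, hcq.symm, hpc.symm, hdx, (fun h => hpq h.symm), hqx, hncx⟩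
    · by_cases hdq : d = q
      · subst hdq
        by_cases hpx : G.Adj p x
        · exact hdg ⟨c, d, x, p, hcq.ne, Ne.symm hxc, hpc.ne', Ne.symm hxq, Ne.symm hpq_ne,
            hxp, hcq, hdx, hpx.symm, hpc, fun h => hpq h.symm⟩
        · exact h4p ⟨p, c, d, x, hpc.ne, hpq_ne, Ne.symm hxp, hcq.ne, Ne.symm hxc,
            Ne.symm hxq, hpc, hcq, hdx, hpq, hpx, hncx⟩
      · by_cases hpd : G.Adj p d
        · by_cases hpx : G.Adj p x
          · exact hdg ⟨d, c, p, x, hcd.ne', fun h => hdp h, hdx.ne, hpc.ne', Ne.symm hxc,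
              Ne.symm hxp, hcd.symm, hpc.symm, hpx, hdx.symm, hncx⟩
          · exact h3p ⟨d, p, c, x, fun h => hdp h, hcd.ne', hdx.ne, hpc.ne, Ne.symm hxp,
              Ne.symm hxc, hpd.symm, hpc, hcd, hdx, hpx, hncx⟩
        · by_cases hpx : G.Adj p x
          · exact hdg ⟨p, c, d, x, hpc.ne, fun h => hdp (by rw [h]), Ne.symm hxp, hcd.ne,
              Ne.symm hxc, hdx.ne, hpc, hcd, hdx, hpx.symm, hncx⟩
          · exact h4p ⟨p, c, d, x, hpc.ne, fun h => hdp (by rw [h]), Ne.symm hxp, hcd.ne,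
              Ne.symm hxc, hdx.ne, hpc, hcd, hdx, hpd, hpx, hncx⟩
  -- claim D : any off-centre edge is fully adjacent to all other off-centre vertices
  have hD : ∀ x y r : α, G.Adj x y → x ≠ c → y ≠ c → r ≠ c → r ≠ x → r ≠ y →
      G.Adj r x ∧ G.Adj r y := by
    intro x y r hxy hxc hyc hrc hrx hry
    by_cases h1 : G.Adj r x <;> by_cases h2 : G.Adj r y
    · exact ⟨h1, h2⟩
    · exact (hdg ⟨x, y, c, r, hxy.ne, hxc, Ne.symm hrx, hyc, Ne.symm hry, Ne.symm hrc,
        hxy, (hhub y hyc).symm, hhub r hrc, h1, fun h => h2 h.symm⟩).elim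
    · exact (hdg ⟨y, x, c, r, hxy.ne', hyc, Ne.symm hry, hxc, Ne.symm hrx, Ne.symm hrc,
        hxy.symm, (hhub x hxc).symm, hhub r hrc, h2, fun h => h1 h.symm⟩).elim
    · exact (h3p ⟨c, x, y, r, Ne.symm hxc, Ne.symm hyc, Ne.symm hrc, hxy.ne,
        Ne.symm hrx, Ne.symm hry, hhub x hxc, hxy, (hhub y hyc).symm, hhub r hrc,
        fun h => h1 h.symm, fun h => h2 h.symm⟩).elim
  -- helper E : an off-centre edge at p' (with p',q' a non-adjacent pair) is impossible
  have hE : ∀ p' q' y' : α, ¬G.Adj p' q' → p' ≠ q' → p' ≠ c → q' ≠ c → y' ≠ c → y' ≠ p' →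
      y' ≠ q' → G.Adj p' y' → False := by
    intro p' q' y' h1 h2 h3 h4 h5 h6 h7 hedge
    by_cases hqy : G.Adj q' y'
    · exact hdg ⟨y', p', c, q', h6, h5, h7, h3, h2, Ne.symm h4,
        hedge.symm, (hhub p' h3).symm, hhub q' h4, hqy, h1⟩
    · exact h3p ⟨c, p', y', q', Ne.symm h3, Ne.symm h5, Ne.symm h4, Ne.symm h6, h2, h7,
        hhub p' h3, hedge, (hhub y' h5).symm, hhub q' h4, h1, fun h => hqy h.symm⟩
  -- conclude: G is a star with centre c
  refine ⟨c, fun x y => ⟨fun hxy => ⟨hxy.ne, ?_⟩, ?_⟩⟩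
  · by_contra hcon
    push_neg at hcon
    obtain ⟨hxc, hyc⟩ := hcon
    by_cases hxp : x = p
    · subst hxp
      by_cases hyq : y = q
      · subst hyq; exact hpq hxy
      · exact hE x q y hpq hpq_ne hpc.ne hcq.ne' hyc hxy.ne' hyq hxy
    · by_cases hxq : x = q
      · subst hxq
        by_cases hyp : y = p
        · subst hyp; exact hpq hxy.symm
        · exact hE x p y (fun h => hpq h.symm) hpq_ne.symm hcq.ne' hpc.ne hyc hxy.ne' hyp hxy
      · by_cases hyp : y = p
        · subst hyp
          exact hE y q x hpq hpq_ne hpc.ne hcq.ne' hxc hxy.ne hxq hxy.symm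
        · by_cases hyq : y = q
          · subst hyq
            exact hE y p x (fun h => hpq h.symm) hpq_ne.symm hcq.ne' hpc.ne hxc hxy.ne hxp hxy.symm
          · obtain ⟨hpx, hpy⟩ := hD x y p hxy hxc hyc hpc.ne (Ne.symm hxp) (Ne.symm hyp)
            obtain ⟨hqx, hqy⟩ := hD x y q hxy hxc hyc hcq.ne' (Ne.symm hxq) (Ne.symm hyq)
            exact hdg ⟨x, p, y, q, hxp, hxy.ne, hxq, Ne.symm hyp, hpq_ne,
              hyq, hpx.symm, hpy, hqy.symm, hqx, hpq⟩
  · rintro ⟨hne', rfl | rfl⟩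
    · exact hhub y (Ne.symm hne')
    · exact (hhub x hne').symm

end PTPgraph

section PTPcycles
set_option linter.unusedSectionVars false
set_option maxHeartbeats 1000000
variable {G : SimpleGraph α}

lemma diag_not_cycleComplete (h : HasDiag G) : ¬ CycleComplete G := by
  obtain ⟨a, b, c, d, nab, nac, nad, nbc, nbd, ncd, hab, hbc, hcd, hda, hbd⟩ := h
  intro hCC
  classical
  let w : G.Walk a a :=
    .cons hab (.cons hbc (.cons hcd (.cons hda .nil)))
  have hcyc : w.IsCycle := by
    rw [SimpleGraph.Walk.isCycle_def]
    refine ⟨?_, by simp [w], ?_⟩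
    · rw [SimpleGraph.Walk.isTrail_def]
      simp [w, List.nodup_cons, Sym2.eq_iff, nab, nac, nad, nbc, nbd, ncd,
        Ne.symm nab, Ne.symm nac, Ne.symm nad, Ne.symm nbc, Ne.symm nbd, Ne.symm ncd]
    · simp [w, nbc, nbd, ncd, Ne.symm nab, Ne.symm nac, Ne.symm nad]
  have hb : b ∈ w.support := by simp [w]
  have hd : d ∈ w.support := by simp [w]
  exact hbd (hCC a w hcyc b hb d hd nbd)

lemma star_no_cycle (hs : IsStarGraph G) (u : α) (w : G.Walk u u) : ¬ w.IsCycle := by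
  obtain ⟨ctr, hstar⟩ := hs
  intro hcyc
  have hlen := hcyc.three_le_length
  cases w with
  | nil => simp at hlen
  | @cons _ b _ h₁ w₁ =>
    cases w₁ with
    | nil => simp at hlen
    | @cons _ e _ h₂ w₂ =>
      cases w₂ with
      | nil => simp [SimpleGraph.Walk.length_cons] at hlen
      | @cons _ f _ h₃ w₃ =>
        have hnd := hcyc.support_nodup
        simp only [SimpleGraph.Walk.support_cons, List.tail_cons, List.nodup_cons,
          List.mem_cons] at hnd
        by_cases hb : b = ctr
        · have he : e ≠ ctr := fun h => h₂.ne (hb.trans h.symm)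
          have hf : f = ctr := by
            rcases ((hstar e f).mp h₃).2 with h | h
            · exact absurd h he
            · exact h
          apply hnd.1
          right
          rw [hb, ← hf]
          exact w₃.start_mem_support
        · have hu : u = ctr := by
            rcases ((hstar u b).mp h₁).2 with h | h
            · exact h
            · exact absurd h hb
          have he : e = ctr := by
            rcases ((hstar b e).mp h₂).2 with h | h
            · exact absurd h hb
            · exact h
          apply hnd.2.1
          rw [he, ← hu]
          exact w₃.end_mem_support

lemma star_cycleComplete (hs : IsStarGraph G) : CycleComplete G :=
  fun u w hcyc => absurd hcyc (star_no_cycle hs u w)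

lemma complete_cycleComplete (hc : IsCompleteGraph G) : CycleComplete G :=
  fun _ _ _ x _ y _ hxy => hc x y hxy

lemma complete_no4Path (hc : IsCompleteGraph G) : ¬ Has4Path G := by
  rintro ⟨i, j, k, l, nij, nik, nil, njk, njl, nkl, _, _, _, bik, _, _⟩
  exact bik (hc i k nik)

lemma complete_no3Pan (hc : IsCompleteGraph G) : ¬ Has3Pan G := by
  rintro ⟨i, j, k, l, nij, nik, nil, njk, njl, nkl, _, _, _, _, bjl, _⟩
  exact bjl (hc j l njl)

lemma star_no4Path (hs : IsStarGraph G) : ¬ Has4Path G := by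
  obtain ⟨c, hstar⟩ := hs
  rintro ⟨i, j, k, l, nij, nik, nil, njk, njl, nkl, aij, ajk, akl, _, _, _⟩
  rcases ((hstar i j).mp aij).2 with h1 | h1
  · rcases ((hstar j k).mp ajk).2 with h2 | h2
    · exact nij (h1.trans h2.symm)
    · exact nik (h1.trans h2.symm)
  · rcases ((hstar k l).mp akl).2 with h2 | h2
    · exact njk (h1.trans h2.symm)
    · exact njl (h1.trans h2.symm)

lemma star_no3Pan (hs : IsStarGraph G) : ¬ Has3Pan G := by
  obtain ⟨c, hstar⟩ := hs
  rintro ⟨i, j, k, l, nij, nik, nil, njk, njl, nkl, aij, ajk, aki, _, _, _⟩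
  rcases ((hstar i j).mp aij).2 with h1 | h1
  · rcases ((hstar j k).mp ajk).2 with h2 | h2
    · exact nij (h1.trans h2.symm)
    · exact nik (h1.trans h2.symm)
  · rcases ((hstar k i).mp aki).2 with h2 | h2
    · exact njk (h1.trans h2.symm)
    · exact nij (h2.trans h1.symm)

end PTPcycles

section PTPpreserve
set_option linter.unusedSectionVars false
set_option maxHeartbeats 1000000
variable [Fintype α] [DecidableEq α] {G : SimpleGraph α}

lemma commGame_of_complete (hc : IsCompleteGraph G) (v : Finset α → ℝ) (hv0 : v ∅ = 0) :
    commGame G v = v := by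
  funext S
  rcases S.eq_empty_or_nonempty with rfl | hS
  · rw [commGame_empty, hv0]
  apply commGame_connected _ _ hS
  intro i hi j hj
  by_cases h : i = j
  · rw [h]
  · exact Relation.ReflTransGen.single ⟨hi, hj, hc i j h⟩

lemma preserves_complete (ω : α → ℝ) (hc : IsCompleteGraph G) :
    Preserves G ω (fun _ => 1) := by
  intro v hv0 hvc
  rw [commGame_of_complete hc v hv0]
  exact hvc

lemma preserves_star (ω : α → ℝ) (hω : ∀ i, 0 < ω i) (hs : IsStarGraph G) :
    Preserves G ω (fun _ => 1) := by
  obtain ⟨c, hstar⟩ := hs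
  intro v hv0 hvc S T hST
  have hSsubT := hST.subset
  have hconnc : ∀ A : Finset α, c ∈ A → commGame G v A = v A := by
    intro A hcA
    apply commGame_connected _ _ ⟨c, hcA⟩
    intro i hi j hj
    have ric : Relation.ReflTransGen (relIn G A) i c := by
      by_cases h : i = c
      · rw [h]
      · exact Relation.ReflTransGen.single ⟨hi, hcA, (hstar i c).mpr ⟨h, Or.inr rfl⟩⟩
    have rcj : Relation.ReflTransGen (relIn G A) c j := by
      by_cases h : j = c
      · rw [h]
      · exact Relation.ReflTransGen.single ⟨hcA, hj, (hstar c j).mpr ⟨fun hh => h hh.symm, Or.inl rfl⟩⟩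
    exact ric.trans rcj
  have hnoc : ∀ A : Finset α, c ∉ A → commGame G v A = ∑ x ∈ A, v {x} := by
    intro A hcA
    apply commGame_isolated
    intro i hi j hj hadj
    rcases ((hstar i j).mp hadj).2 with h | h
    · exact hcA (h ▸ hi)
    · exact hcA (h ▸ hj)
  by_cases hcT : c ∈ T
  · by_cases hcS : c ∈ S
    · have hv := hvc S T hST
      rw [← Finset.add_sum_erase _ _ hcS] at hv ⊢
      have hrest : ∑ i ∈ S.erase c, wbar ω (fun _ => 1) T i *
          (commGame G v T - commGame G v (T.erase i) - commGame G v S + commGame G v (S.erase i))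
          = ∑ i ∈ S.erase c, wbar ω (fun _ => 1) T i *
          (v T - v (T.erase i) - v S + v (S.erase i)) := by
        apply Finset.sum_congr rfl
        intro i hi
        obtain ⟨hic, hiS⟩ := Finset.mem_erase.mp hi
        rw [hconnc T hcT, hconnc S hcS,
          hconnc (T.erase i) (Finset.mem_erase.mpr ⟨Ne.symm hic, hcT⟩),
          hconnc (S.erase i) (Finset.mem_erase.mpr ⟨Ne.symm hic, hcS⟩)]
      rw [hrest, hconnc T hcT, hconnc S hcS, hnoc (T.erase c) (by simp),
        hnoc (S.erase c) (by simp), wbar_eq ω hcT]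
      rw [wbar_eq ω hcT] at hv
      have hmono := mono hω hv0 hvc (Finset.erase_subset_erase c hSsubT)
      have hc0 : ω c * (v T - v (T.erase c) - v S + v (S.erase c)) ≤
          ω c * (v T - ∑ x ∈ (T.erase c), v {x} - v S + ∑ x ∈ (S.erase c), v {x}) := by
        apply mul_le_mul_of_nonneg_left _ (hω c).le
        linarith
      linarith [hv, hc0]
    · apply Finset.sum_nonneg
      intro i hi
      have hic : i ≠ c := fun h => hcS (h ▸ hi)
      rw [hconnc T hcT, hconnc (T.erase i) (Finset.mem_erase.mpr ⟨Ne.symm hic, hcT⟩),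
        hnoc S hcS, hnoc (S.erase i) (fun h => hcS (Finset.mem_of_mem_erase h)),
        wbar_eq ω (hSsubT hi)]
      have hsum : ∑ x ∈ S, v {x} = v {i} + ∑ x ∈ S.erase i, v {x} :=
        (Finset.add_sum_erase _ _ hi).symm
      have hk : v (T.erase i) + v {i} ≤ v T := by
        have := k1 hω hv0 hvc (T.erase i) i (by simp)
        rwa [Finset.insert_erase (hSsubT hi)] at this
      rw [hsum]
      exact mul_nonneg (hω i).le (by linarith)
  · apply Finset.sum_nonneg
    intro i hi
    rw [hnoc T hcT, hnoc (T.erase i) (fun h => hcT (Finset.mem_of_mem_erase h)),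
      hnoc S (fun h => hcT (hSsubT h)),
      hnoc (S.erase i) (fun h => hcT (hSsubT (Finset.mem_of_mem_erase h)))]
    have hT : ∑ x ∈ T, v {x} = v {i} + ∑ x ∈ T.erase i, v {x} :=
      (Finset.add_sum_erase _ _ (hSsubT hi)).symm
    have hS : ∑ x ∈ S, v {x} = v {i} + ∑ x ∈ S.erase i, v {x} :=
      (Finset.add_sum_erase _ _ hi).symm
    rw [hT, hS]
    have hz : v {i} + ∑ x ∈ T.erase i, v {x} - (∑ x ∈ T.erase i, v {x})
        - (v {i} + ∑ x ∈ S.erase i, v {x}) + ∑ x ∈ S.erase i, v {x} = 0 := by ring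
    rw [hz, mul_zero]

end PTPpreserve






/-- For a connected graph `G` and a weight system with the trivial ordered partition `Σ = (N)`
(all priorities equal to `1`), the following are equivalent: (1) `G` preserves
`(ω,Σ)`-convexity; (2) `G` is cycle-complete and contains no restricted `4`-path or `3`-pan
subgraph; (3) `G` is a complete graph or a star. -/
theorem preserves_trivial_partition_tfae [Fintype α] [DecidableEq α]
    (G : SimpleGraph α) (hG : G.Connected) (ω : α → ℝ) (hω : ∀ i, 0 < ω i) :
    List.TFAE
      [Preserves G ω (fun _ => 1),
       CycleComplete G ∧ ¬Has4Path G ∧ ¬Has3Pan G,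
       IsCompleteGraph G ∨ IsStarGraph G] := by
  tfae_have 3 → 1 := by
    rintro (hc | hs)
    · exact preserves_complete ω hc
    · exact preserves_star ω hω hs
  tfae_have 1 → 3 := by
    intro h1
    by_contra hn
    by_cases h4 : Has4Path G
    · obtain ⟨i, j, k, l, n1, n2, n3, n4, n5, n6, a1, a2, a3, b1, b2, b3⟩ := h4
      exact notPreserves_p4 ω hω n1 n2 n3 n4 n5 n6 a1 a2 a3 b1 b2 b3 h1
    by_cases h3 : Has3Pan G
    · obtain ⟨i, j, k, l, n1, n2, n3, n4, n5, n6, a1, a2, a3, a4, b1, b2⟩ := h3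
      exact notPreserves_pan ω hω n1 n2 n3 n4 n5 n6 a1 a2 a3 a4 b1 b2 h1
    by_cases hdg : HasDiag G
    · obtain ⟨a, b, c, d, n1, n2, n3, n4, n5, n6, a1, a2, a3, a4, b1⟩ := hdg
      exact notPreserves_diag ω hω n1 n2 n3 n4 n5 n6 a1 a2 a3 a4 b1 h1
    · exact hn (extract hG h4 h3 hdg)
  tfae_have 2 → 3 := by
    rintro ⟨hCC, h4, h3⟩
    exact extract hG h4 h3 (fun hdiag => diag_not_cycleComplete hdiag hCC)
  tfae_have 3 → 2 := by
    rintro (hc | hs)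
    · exact ⟨complete_cycleComplete hc, complete_no4Path hc, complete_no3Pan hc⟩
    · exact ⟨star_cycleComplete hs, star_no4Path hs, star_no3Pan hs⟩
  tfae_finish

end
end
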